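/- arXiv:2211.11504 — 2 statements merged into one kernel-verified Lean document; each statement's English description precedes it below -/
import Mathlib

section
/- For all real s in the open interval (0,1), the binary entropy satisfies H(s^2) < 2s·H(s). -/
open Real Set

noncomputable def binEnt (p : ℝ) : ℝ := -p * Real.log p - (1 - p) * Real.log (1 - p)

theorem stmt0 (s : ℝ) (hs : s ∈ Set.Ioo (0:ℝ) 1) :
    binEnt (s ^ 2) < 2 * s * binEnt s := by
  obtain ⟨hs0, hs1⟩ := hs
  have h1s : (0:ℝ) < 1 - s := by linarith
  have h1p : (0:ℝ) < 1 + s := by linarith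
  have hlogsq : Real.log (s ^ 2) = 2 * Real.log s := by
    rw [Real.log_pow]; push_cast; ring
  have hfac : 1 - s ^ 2 = (1 - s) * (1 + s) := by ring
  have hlog2 : Real.log (1 - s ^ 2) = Real.log (1 - s) + Real.log (1 + s) := by
    rw [hfac, Real.log_mul (ne_of_gt h1s) (ne_of_gt h1p)]
  -- c = log(1+s) satisfies (1+s)*c > s
  have hc : s < (1 + s) * Real.log (1 + s) := by
    have h := Real.log_lt_sub_one_of_pos (x := (1 + s)⁻¹) (by positivity)
      (by intro h; rw [inv_eq_one] at h; linarith)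
    rw [Real.log_inv] at h
    have h2 : (1 + s)⁻¹ - 1 = -(s / (1 + s)) := by field_simp; ring
    rw [h2] at h
    have := (div_lt_iff₀ h1p).mp (by linarith : s / (1 + s) < Real.log (1 + s))
    linarith
  -- b = log(1-s) satisfies (1-s)*b > -s
  have hb : -s < (1 - s) * Real.log (1 - s) := by
    have h := Real.log_lt_sub_one_of_pos (x := (1 - s)⁻¹) (by positivity)
      (by intro h; rw [inv_eq_one] at h; linarith)
    rw [Real.log_inv] at h
    have h2 : (1 - s)⁻¹ - 1 = s / (1 - s) := by field_simp; ring
    rw [h2] at h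
    have := (lt_div_iff₀ h1s).mp (by linarith : -Real.log (1 - s) < s / (1 - s))
    linarith
  unfold binEnt
  rw [hlogsq, hlog2]
  nlinarith [mul_pos h1s (by linarith : 0 < (1 - s) * Real.log (1 - s) + (1 + s) * Real.log (1 + s))]
end

section
/- The function s ↦ H(s^2)/(s·H(s)) on (0,1) attains its global minimum at s = (√5-1)/2, where its value is 2/(√5-1) = (√5+1)/2. -/
set_option maxHeartbeats 1000000

open Real Set Finset

noncomputable def gr : ℝ := (Real.sqrt 5 + 1) / 2
noncomputable def x0 : ℝ := (Real.sqrt 5 - 1) / 2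
noncomputable def Nf (x : ℝ) : ℝ := 2 * Real.log (1 - x^2) - gr * (x * Real.log (1 - x))
noncomputable def NP (x : ℝ) : ℝ := -4*x/(1-x^2) - gr * Real.log (1-x) + gr * x/(1-x)
noncomputable def Pc (x : ℝ) : ℝ := 2*gr - 4 + 3*gr*x - 4*x^2 - gr*x^3
noncomputable def gf (x : ℝ) : ℝ := binEnt (x^2) / x^2 - gr * (binEnt x / x)

lemma sqrt5_sq : Real.sqrt 5 ^ 2 = 5 := Real.sq_sqrt (by norm_num)
lemma sqrt5_lb : 2.2360679 < Real.sqrt 5 := by nlinarith [sqrt5_sq, Real.sqrt_nonneg 5]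
lemma sqrt5_ub : Real.sqrt 5 < 2.2360680 := by nlinarith [sqrt5_sq, Real.sqrt_nonneg 5]
lemma gr_lb : 1.6180339 < gr := by unfold gr; nlinarith [sqrt5_lb]
lemma gr_ub : gr < 1.6180340 := by unfold gr; nlinarith [sqrt5_ub]
lemma x0_lb : 0.6180339 < x0 := by unfold x0; nlinarith [sqrt5_lb]
lemma x0_ub : x0 < 0.6180340 := by unfold x0; nlinarith [sqrt5_ub]
lemma x0_sq : x0^2 = 1 - x0 := by unfold x0; linear_combination sqrt5_sq / 4
lemma grx0 : gr * x0 = 1 := by unfold gr x0; linear_combination sqrt5_sq / 4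

lemma binEnt_symm (p : ℝ) : binEnt (1 - p) = binEnt p := by
  unfold binEnt
  rw [show (1 : ℝ) - (1 - p) = p by ring]
  ring

lemma binEnt_pos {p : ℝ} (h0 : 0 < p) (h1 : p < 1) : 0 < binEnt p := by
  unfold binEnt
  have l1 : Real.log p < 0 := Real.log_neg h0 h1
  have l2 : Real.log (1 - p) < 0 := Real.log_neg (by linarith) (by linarith)
  nlinarith

lemma binEnt_cont : Continuous binEnt := by
  unfold binEnt
  have h1 : Continuous fun p : ℝ => p * Real.log p := Real.continuous_mul_log
  have h2 : Continuous fun p : ℝ => (1 - p) * Real.log (1 - p) :=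
    Real.continuous_mul_log.comp (continuous_const.sub continuous_id)
  exact (h1.neg.sub h2).congr (fun p => by simp only [Pi.neg_apply, Pi.sub_apply]; ring)

lemma neg_log_one_sub_le {x : ℝ} (h0 : 0 < x) (h1 : x < 1) (n : ℕ) :
    -Real.log (1 - x) ≤ (∑ i ∈ range n, x ^ (i + 1) / (i + 1)) + x ^ (n+1) / (1 - x) := by
  have h := Real.abs_log_sub_add_sum_range_le (x := x) (by rw [abs_of_pos h0]; exact h1) n
  rw [abs_of_pos h0] at h
  have := (abs_le.1 h).1
  linarith

lemma neg_log_one_sub_ge {x : ℝ} (h0 : 0 < x) (h1 : x < 1) (n : ℕ) :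
    (∑ i ∈ range n, x ^ (i + 1) / (i + 1)) - x ^ (n+1) / (1 - x) ≤ -Real.log (1 - x) := by
  have h := Real.abs_log_sub_add_sum_range_le (x := x) (by rw [abs_of_pos h0]; exact h1) n
  rw [abs_of_pos h0] at h
  have := (abs_le.1 h).2
  linarith

lemma log_one_sub_le {x : ℝ} (h0 : 0 < x) (h1 : x < 1) (n : ℕ) :
    Real.log (1 - x) ≤ -(∑ i ∈ range n, x ^ (i + 1) / (i + 1)) + x ^ (n+1) / (1 - x) := by
  have := neg_log_one_sub_ge h0 h1 n
  linarith

lemma F1 {x : ℝ} (h0 : 0 < x) (hx : x ≤ 9/20) : Nf x ≤ 0 := by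
  have h1 : x < 1 := by linarith
  have hx2pos : 0 < x^2 := by positivity
  have hx2lt : x^2 < 1 := by nlinarith
  have hA := log_one_sub_le (x := x^2) hx2pos hx2lt 3
  have hB := neg_log_one_sub_le h0 h1 6
  simp only [Finset.sum_range_succ, Finset.sum_range_zero] at hA hB
  norm_num at hA hB
  have hsub1 : (1:ℝ) - x^2 ≥ 319/400 := by nlinarith
  have hsub2 : (1:ℝ) - x ≥ 11/20 := by linarith
  have hr1 : (x^2)^4 / (1 - x^2) ≤ (x^2)^4 * (400/319) := by
    rw [div_le_iff₀ (by nlinarith)]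
    nlinarith [pow_pos hx2pos 4]
  have hr2 : x^7 / (1 - x) ≤ x^7 * (20/11) := by
    rw [div_le_iff₀ (by linarith)]
    nlinarith [pow_pos h0 7]
  have hgrpos : 0 < gr := by nlinarith [gr_lb]
  have hxg : 0 < gr * x := by positivity
  obtain ⟨B, hBdef⟩ : ∃ B : ℝ, B = (x + x^2/2 + x^3/3 + x^4/4 + x^5/5 + x^6/6) + x^7 * (20/11) :=
    ⟨_, rfl⟩
  have hBnn : 0 ≤ B := by rw [hBdef]; positivity
  have hBlog : -Real.log (1-x) ≤ B := by rw [hBdef]; linarith [hB, hr2]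
  have hAlog : Real.log (1-x^2) ≤ -(x^2 + (x^2)^2/2 + (x^2)^3/3) + (x^2)^4*(400/319) := by
    linarith [hA, hr1]
  have t1 : gr * x * (-Real.log (1-x)) ≤ gr * x * B :=
    mul_le_mul_of_nonneg_left hBlog hxg.le
  have t2 : gr * x * B ≤ 1.6180340 * (x * B) := by
    have := mul_le_mul_of_nonneg_right gr_ub.le (mul_nonneg h0.le hBnn)
    nlinarith [this]
  have hNfeq : Nf x = 2 * Real.log (1-x^2) + gr * x * (-Real.log (1-x)) := by
    unfold Nf; ring
  have final : -2*(x^2 + (x^2)^2/2 + (x^2)^3/3) + 2*((x^2)^4 * (400/319))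
      + 1.6180340 * (x * B) ≤ 0 := by
    rw [hBdef]
    nlinarith [h0, hx, mul_nonneg (sub_nonneg.2 hx) (pow_nonneg h0.le 2),
      mul_nonneg (sub_nonneg.2 hx) (pow_nonneg h0.le 3),
      mul_nonneg (sub_nonneg.2 hx) (pow_nonneg h0.le 4),
      mul_nonneg (sub_nonneg.2 hx) (pow_nonneg h0.le 5),
      mul_nonneg (sub_nonneg.2 hx) (pow_nonneg h0.le 6),
      mul_nonneg (sub_nonneg.2 hx) (pow_nonneg h0.le 7),
      sq_nonneg (x - 9/20), pow_nonneg h0.le 2, pow_nonneg h0.le 4, pow_nonneg h0.le 6]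
  have c1 : Nf x ≤ 2*(-(x^2 + (x^2)^2/2 + (x^2)^3/3) + (x^2)^4*(400/319)) + 1.6180340*(x*B) := by
    rw [hNfeq]
    linarith [hAlog, t1, t2]
  linarith [c1, final]

lemma NPp1 : 0 < NP (9/20) := by
  have h := neg_log_one_sub_ge (x := (9:ℝ)/20) (by norm_num) (by norm_num) 7
  simp only [Finset.sum_range_succ, Finset.sum_range_zero] at h
  norm_num at h
  unfold NP
  norm_num
  nlinarith [gr_lb, gr_ub, h]

lemma NPp2 : 0 < NP (3/4) := by
  have hlog : Real.log (1 - 3/4 : ℝ) = -(2 * Real.log 2) := by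
    rw [show (1:ℝ) - 3/4 = 4⁻¹ by norm_num, Real.log_inv,
      show (4:ℝ) = 2^2 by norm_num, Real.log_pow]
    push_cast; ring
  have : NP (3/4) = -48/7 + gr*(2*Real.log 2) + 3*gr := by
    unfold NP
    rw [hlog]
    norm_num
    ring
  rw [this]
  nlinarith [Real.log_two_gt_d9, gr_lb]

lemma Pc_cont : Continuous Pc := by unfold Pc; fun_prop

lemma hasDerivAt_Pc (x : ℝ) : HasDerivAt Pc (3*gr - 8*x - 3*gr*x^2) x := by
  have h3 : HasDerivAt (fun x:ℝ => x^3) (3*x^2) x := by simpa using hasDerivAt_pow 3 x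
  have h2 : HasDerivAt (fun x:ℝ => x^2) (2*x) x := by simpa using hasDerivAt_pow 2 x
  have h1 : HasDerivAt (fun x:ℝ => x) (1:ℝ) x := hasDerivAt_id x
  have := (((hasDerivAt_const x (2*gr-4)).add (h1.const_mul (3*gr))).sub
    (h2.const_mul 4)).sub (h3.const_mul gr)
  refine this.congr_deriv ?_
  ring

lemma Pc_anti : StrictAntiOn Pc (Icc (12/25 : ℝ) 1) := by
  apply strictAntiOn_of_deriv_neg (convex_Icc _ _) Pc_cont.continuousOn
  intro x hx
  rw [interior_Icc] at hx
  rw [(hasDerivAt_Pc x).deriv]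
  nlinarith [gr_lb, gr_ub, hx.1, hx.2, sq_nonneg x]

lemma Pc063 : 0 < Pc (63/100) := by unfold Pc; nlinarith [gr_lb, gr_ub]
lemma Pc075 : Pc (3/4) < 0 := by unfold Pc; nlinarith [gr_lb, gr_ub]
lemma Pc_mid : ∀ x : ℝ, 9/20 ≤ x → x ≤ 63/100 → 0 ≤ Pc x := by
  intro x h1 h2
  unfold Pc
  nlinarith [gr_lb, gr_ub, mul_nonneg (sub_nonneg.2 h1) (sub_nonneg.2 h2),
    sq_nonneg (x - 9/20), sq_nonneg (x - 63/100),
    mul_nonneg (mul_nonneg (sub_nonneg.2 h1) (sub_nonneg.2 h1)) (sub_nonneg.2 h2)]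

lemma hasDerivAt_binEnt {p : ℝ} (h0 : 0 < p) (h1 : p < 1) :
    HasDerivAt binEnt (Real.log (1 - p) - Real.log p) p := by
  have h1p : (1:ℝ) - p ≠ 0 := by linarith
  have hA : HasDerivAt (fun p : ℝ => p * Real.log p) (Real.log p + 1) p :=
    Real.hasDerivAt_mul_log h0.ne'
  have hsub : HasDerivAt (fun p : ℝ => 1 - p) (-1 : ℝ) p := by
    simpa using (hasDerivAt_id p).const_sub 1
  have hB : HasDerivAt (fun p : ℝ => (1 - p) * Real.log (1 - p))
      ((Real.log (1 - p) + 1) * (-1)) p :=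
    (Real.hasDerivAt_mul_log h1p).comp p hsub
  have := (hA.neg).sub hB
  refine (this.congr_deriv ?_).congr_of_eventuallyEq (Filter.Eventually.of_forall fun q => ?_)
  · ring
  · simp only [binEnt, Pi.neg_apply, Pi.sub_apply]; ring

lemma hasDerivAt_Nf {x : ℝ} (h0 : 0 < x) (h1 : x < 1) :
    HasDerivAt Nf (NP x) x := by
  have hx2 : (1:ℝ) - x^2 ≠ 0 := by nlinarith
  have hx1 : (1:ℝ) - x ≠ 0 := by linarith
  have hA : HasDerivAt (fun x : ℝ => 1 - x^2) (-(2*x)) x := by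
    simpa using ((hasDerivAt_pow 2 x).const_sub 1)
  have hlog2 : HasDerivAt (fun x : ℝ => Real.log (1 - x^2)) (-(2*x) / (1 - x^2)) x := hA.log hx2
  have hB : HasDerivAt (fun x : ℝ => 1 - x) (-1 : ℝ) x := by
    simpa using (hasDerivAt_id x).const_sub 1
  have hlog1 : HasDerivAt (fun x : ℝ => Real.log (1 - x)) (-1 / (1 - x)) x := hB.log hx1
  have hxlog : HasDerivAt (fun x : ℝ => x * Real.log (1 - x))
      (1 * Real.log (1 - x) + x * (-1 / (1 - x))) x :=
    (hasDerivAt_id x).mul hlog1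
  have := (hlog2.const_mul 2).sub (hxlog.const_mul gr)
  refine this.congr_deriv ?_
  unfold NP
  field_simp
  ring

lemma hasDerivAt_NP {x : ℝ} (h0 : 0 < x) (h1 : x < 1) :
    HasDerivAt NP (Pc x / (1 - x^2)^2) x := by
  have hx2 : (1:ℝ) - x^2 ≠ 0 := by nlinarith
  have hx1 : (1:ℝ) - x ≠ 0 := by linarith
  have hA : HasDerivAt (fun x : ℝ => 1 - x^2) (-(2*x)) x := by
    simpa using ((hasDerivAt_pow 2 x).const_sub 1)
  have hB : HasDerivAt (fun x : ℝ => 1 - x) (-1 : ℝ) x := by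
    simpa using (hasDerivAt_id x).const_sub 1
  have ht1 : HasDerivAt (fun x : ℝ => -4*x/(1-x^2))
      (((-4) * (1 - x^2) - (-4*x) * (-(2*x))) / (1 - x^2)^2) x := by
    have := (((hasDerivAt_id x).const_mul (-4)).div hA hx2)
    simpa [Pi.div_def] using this
  have hlog1 : HasDerivAt (fun x : ℝ => Real.log (1 - x)) (-1 / (1 - x)) x := hB.log hx1
  have ht3 : HasDerivAt (fun x : ℝ => gr * x/(1-x))
      ((gr * (1 - x) - gr * x * (-1)) / (1 - x)^2) x := by
    have := (((hasDerivAt_id x).const_mul gr).div hB hx1)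
    simpa [Pi.div_def] using this
  have := (ht1.sub (hlog1.const_mul gr)).add ht3
  refine this.congr_deriv ?_
  unfold Pc
  field_simp
  ring

lemma hasDerivAt_gf {x : ℝ} (h0 : 0 < x) (h1 : x < 1) :
    HasDerivAt gf (Nf x / x^3) x := by
  have hx : x ≠ 0 := h0.ne'
  have hsq0 : 0 < x^2 := by positivity
  have hsq1 : x^2 < 1 := by nlinarith
  have hpow : HasDerivAt (fun x : ℝ => x^2) (2*x) x := by simpa using hasDerivAt_pow 2 x
  have hB2 : HasDerivAt (fun x : ℝ => binEnt (x^2))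
      ((Real.log (1 - x^2) - 2 * Real.log x) * (2*x)) x := by
    have h := HasDerivAt.comp (h₂ := binEnt) (h := fun y : ℝ => y^2) (x := x)
      (by simpa using hasDerivAt_binEnt hsq0 hsq1) hpow
    exact h
  have hT1 : HasDerivAt (fun x : ℝ => binEnt (x^2) / x^2)
      (((Real.log (1 - x^2) - 2 * Real.log x) * (2*x) * x^2 - binEnt (x^2) * (2*x)) / (x^2)^2)
      x := hB2.div hpow (by positivity)
  have hT2 : HasDerivAt (fun x : ℝ => binEnt x / x)
      (((Real.log (1 - x) - Real.log x) * x - binEnt x * 1) / x^2) x :=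
    (hasDerivAt_binEnt h0 h1).div (hasDerivAt_id x) hx
  have := hT1.sub (hT2.const_mul gr)
  refine this.congr_deriv ?_
  unfold Nf binEnt
  rw [show Real.log (x^2) = 2 * Real.log x from by simpa using Real.log_pow 2 x]
  field_simp
  ring

-- monotonicity packaging
lemma Nf_monoOn {a b : ℝ} (ha : 0 < a) (hb : b < 1)
    (h : ∀ x, a < x → x < b → 0 ≤ NP x) : MonotoneOn Nf (Icc a b) := by
  apply monotoneOn_of_deriv_nonneg (convex_Icc a b)
  · exact fun x hx => ((hasDerivAt_Nf (lt_of_lt_of_le ha hx.1)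
      (lt_of_le_of_lt hx.2 hb)).continuousAt).continuousWithinAt
  · intro x hx
    rw [interior_Icc] at hx
    exact (hasDerivAt_Nf (ha.trans hx.1) (hx.2.trans hb)).differentiableAt.differentiableWithinAt
  · intro x hx
    rw [interior_Icc] at hx
    rw [(hasDerivAt_Nf (ha.trans hx.1) (hx.2.trans hb)).deriv]
    exact h x hx.1 hx.2

lemma Nf_antiOn {a b : ℝ} (ha : 0 < a) (hb : b < 1)
    (h : ∀ x, a < x → x < b → NP x ≤ 0) : AntitoneOn Nf (Icc a b) := by
  apply antitoneOn_of_deriv_nonpos (convex_Icc a b)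
  · exact fun x hx => ((hasDerivAt_Nf (lt_of_lt_of_le ha hx.1)
      (lt_of_le_of_lt hx.2 hb)).continuousAt).continuousWithinAt
  · intro x hx
    rw [interior_Icc] at hx
    exact (hasDerivAt_Nf (ha.trans hx.1) (hx.2.trans hb)).differentiableAt.differentiableWithinAt
  · intro x hx
    rw [interior_Icc] at hx
    rw [(hasDerivAt_Nf (ha.trans hx.1) (hx.2.trans hb)).deriv]
    exact h x hx.1 hx.2

lemma NP_monoOn {a b : ℝ} (ha : 0 < a) (hb : b < 1)
    (h : ∀ x, a < x → x < b → 0 ≤ Pc x) : MonotoneOn NP (Icc a b) := by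
  apply monotoneOn_of_deriv_nonneg (convex_Icc a b)
  · exact fun x hx => ((hasDerivAt_NP (lt_of_lt_of_le ha hx.1)
      (lt_of_le_of_lt hx.2 hb)).continuousAt).continuousWithinAt
  · intro x hx
    rw [interior_Icc] at hx
    exact (hasDerivAt_NP (ha.trans hx.1) (hx.2.trans hb)).differentiableAt.differentiableWithinAt
  · intro x hx
    rw [interior_Icc] at hx
    rw [(hasDerivAt_NP (ha.trans hx.1) (hx.2.trans hb)).deriv]
    have hx1 : x < 1 := hx.2.trans hb
    have hx0 : 0 < x := ha.trans hx.1
    have h1 : (0:ℝ) < 1 - x^2 := by nlinarith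
    exact div_nonneg (h x hx.1 hx.2) (pow_pos h1 2).le

lemma NP_antiOn {a b : ℝ} (ha : 0 < a) (hb : b < 1)
    (h : ∀ x, a < x → x < b → Pc x ≤ 0) : AntitoneOn NP (Icc a b) := by
  apply antitoneOn_of_deriv_nonpos (convex_Icc a b)
  · exact fun x hx => ((hasDerivAt_NP (lt_of_lt_of_le ha hx.1)
      (lt_of_le_of_lt hx.2 hb)).continuousAt).continuousWithinAt
  · intro x hx
    rw [interior_Icc] at hx
    exact (hasDerivAt_NP (ha.trans hx.1) (hx.2.trans hb)).differentiableAt.differentiableWithinAt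
  · intro x hx
    rw [interior_Icc] at hx
    rw [(hasDerivAt_NP (ha.trans hx.1) (hx.2.trans hb)).deriv]
    have hx1 : x < 1 := hx.2.trans hb
    have hx0 : 0 < x := ha.trans hx.1
    have h1 : (0:ℝ) < 1 - x^2 := by nlinarith
    exact div_nonpos_of_nonpos_of_nonneg (h x hx.1 hx.2) (pow_pos h1 2).le

lemma gf_contOn {a b : ℝ} (ha : 0 < a) : ContinuousOn gf (Icc a b) := by
  intro x hx
  have hx0 : x ≠ 0 := by
    have := hx.1; intro h; rw [h] at this; linarith
  apply ContinuousAt.continuousWithinAt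
  apply ContinuousAt.sub
  · exact ((binEnt_cont.comp (continuous_pow 2)).continuousAt.div
      (continuous_pow 2).continuousAt (pow_ne_zero 2 hx0))
  · exact (continuousAt_const.mul ((binEnt_cont.continuousAt).div continuousAt_id hx0))

lemma gf_monoOn {a b : ℝ} (ha : 0 < a) (hb : b ≤ 1)
    (h : ∀ x, a < x → x < b → 0 ≤ Nf x) : MonotoneOn gf (Icc a b) := by
  apply monotoneOn_of_deriv_nonneg (convex_Icc a b) (gf_contOn ha)
  · intro x hx
    rw [interior_Icc] at hx
    exact (hasDerivAt_gf (ha.trans hx.1)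
      (lt_of_lt_of_le hx.2 hb)).differentiableAt.differentiableWithinAt
  · intro x hx
    rw [interior_Icc] at hx
    rw [(hasDerivAt_gf (ha.trans hx.1) (lt_of_lt_of_le hx.2 hb)).deriv]
    have hx0 : (0:ℝ) < x^3 := pow_pos (ha.trans hx.1) 3
    exact div_nonneg (h x hx.1 hx.2) hx0.le

lemma gf_antiOn {a b : ℝ} (ha : 0 < a) (hb : b ≤ 1)
    (h : ∀ x, a < x → x < b → Nf x ≤ 0) : AntitoneOn gf (Icc a b) := by
  apply antitoneOn_of_deriv_nonpos (convex_Icc a b) (gf_contOn ha)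
  · intro x hx
    rw [interior_Icc] at hx
    exact (hasDerivAt_gf (ha.trans hx.1)
      (lt_of_lt_of_le hx.2 hb)).differentiableAt.differentiableWithinAt
  · intro x hx
    rw [interior_Icc] at hx
    rw [(hasDerivAt_gf (ha.trans hx.1) (lt_of_lt_of_le hx.2 hb)).deriv]
    have hx0 : (0:ℝ) < x^3 := pow_pos (ha.trans hx.1) 3
    exact div_nonpos_of_nonpos_of_nonneg (h x hx.1 hx.2) hx0.le

lemma Nf_x0 : Nf x0 = 0 := by
  have h1 : 1 - x0^2 = x0 := by rw [x0_sq]; ring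
  have h2 : (1:ℝ) - x0 = x0^2 := by rw [x0_sq]
  unfold Nf
  rw [h1, h2, show Real.log (x0^2) = 2*Real.log x0 from by simpa using Real.log_pow 2 x0]
  linear_combination (-2*Real.log x0) * grx0

lemma gf_x0 : gf x0 = 0 := by
  have hx0pos : (0:ℝ) < x0 := by nlinarith [x0_lb]
  have hb : binEnt (x0^2) = binEnt x0 := by rw [x0_sq]; exact binEnt_symm x0
  unfold gf
  rw [hb]
  field_simp
  linear_combination (-(binEnt x0)) * grx0

lemma gf_one : gf 1 = 0 := by
  have hb : binEnt 1 = 0 := by simp [binEnt]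
  unfold gf
  rw [one_pow, hb]
  simp

lemma gf_nonneg : ∀ s ∈ Ioo (0:ℝ) 1, 0 ≤ gf s := by
  obtain ⟨r2, hr2mem, hr2zero⟩ : ∃ r ∈ Icc (63/100:ℝ) (3/4), Pc r = 0 := by
    have h := intermediate_value_Icc' (by norm_num : (63/100:ℝ) ≤ 3/4) Pc_cont.continuousOn
    have h0 : (0:ℝ) ∈ Icc (Pc (3/4)) (Pc (63/100)) := ⟨Pc075.le, Pc063.le⟩
    obtain ⟨r, hr, hr0⟩ := h h0
    exact ⟨r, hr, hr0⟩
  obtain ⟨hr2l, hr2u⟩ := hr2mem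
  have x0l : (0.6180339:ℝ) < x0 := x0_lb
  have x0u : x0 < 0.6180340 := x0_ub
  have hPpos : ∀ x, 9/20 ≤ x → x ≤ r2 → 0 ≤ Pc x := by
    intro x h1 h2
    rcases le_or_gt x (63/100) with h|h
    · exact Pc_mid x h1 h
    · rcases eq_or_lt_of_le h2 with he|hlt
      · rw [he, hr2zero]
      · have := Pc_anti ⟨by norm_num; linarith, by linarith⟩
          ⟨by norm_num; linarith, by linarith⟩ hlt
        rw [hr2zero] at this
        linarith
  have hPneg : ∀ x, r2 ≤ x → x ≤ 1 → Pc x ≤ 0 := by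
    intro x h1 h2
    rcases eq_or_lt_of_le h1 with he|hlt
    · rw [← he, hr2zero]
    · have := Pc_anti ⟨by norm_num; linarith, by linarith⟩ ⟨by norm_num; linarith, h2⟩ hlt
      rw [hr2zero] at this
      linarith
  have hNPpos : ∀ x, 9/20 ≤ x → x ≤ 3/4 → 0 < NP x := by
    intro x hx1 hx2
    rcases le_or_gt x r2 with h|h
    · have hm : MonotoneOn NP (Icc (9/20:ℝ) r2) := NP_monoOn (by norm_num) (by linarith)
        (fun y hy1 hy2 => hPpos y hy1.le hy2.le)
      have := hm ⟨le_refl _, by linarith⟩ ⟨hx1, h⟩ hx1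
      linarith [NPp1]
    · have hm : AntitoneOn NP (Icc r2 (3/4:ℝ)) := NP_antiOn (by linarith) (by norm_num)
        (fun y hy1 hy2 => hPneg y hy1.le (by linarith))
      have := hm ⟨h.le, hx2⟩ ⟨by linarith, le_refl _⟩ hx2
      linarith [NPp2]
  have hNfmono : MonotoneOn Nf (Icc (9/20:ℝ) (3/4)) := Nf_monoOn (by norm_num) (by norm_num)
    (fun y h1 h2 => (hNPpos y h1.le h2.le).le)
  have hNfneg : ∀ x, 0 < x → x ≤ x0 → Nf x ≤ 0 := by
    intro x h0 hx
    rcases le_or_gt x (9/20) with h|h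
    · exact F1 h0 h
    · have := hNfmono ⟨h.le, by linarith⟩ ⟨by linarith, by linarith⟩ hx
      linarith [Nf_x0]
  have hNfpos : ∀ x, x0 ≤ x → x ≤ 3/4 → 0 ≤ Nf x := by
    intro x hx1 hx2
    have := hNfmono ⟨by linarith, by linarith⟩ ⟨by linarith, hx2⟩ hx1
    linarith [Nf_x0]
  have hNfp2 : 0 ≤ Nf (3/4) := hNfpos _ (by linarith) (le_refl _)
  rintro s ⟨hs0, hs1⟩
  rcases le_or_gt s x0 with hcase | hcase
  · have hanti : AntitoneOn gf (Icc s x0) := gf_antiOn hs0 (by linarith)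
      (fun y h1 h2 => hNfneg y (by linarith) (by linarith))
    have := hanti ⟨le_refl _, hcase⟩ ⟨hcase, le_refl _⟩ hcase
    rw [gf_x0] at this
    linarith
  · rcases le_or_gt s (3/4) with hcase2 | hcase2
    · have hmono : MonotoneOn gf (Icc x0 s) := gf_monoOn (by linarith) (by linarith)
        (fun y h1 h2 => hNfpos y h1.le (by linarith))
      have := hmono ⟨le_refl _, hcase.le⟩ ⟨hcase.le, le_refl _⟩ hcase.le
      rw [gf_x0] at this
      linarith
    · rcases le_or_gt 0 (Nf s) with hNs | hNs
      · have hNfge : ∀ y, x0 ≤ y → y ≤ s → 0 ≤ Nf y := by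
          intro y hy1 hy2
          rcases le_or_gt y (3/4) with h|h
          · exact hNfpos y hy1 h
          · have hy1' : y < 1 := by linarith
            rcases le_or_gt 0 (NP y) with hNPy | hNPy
            · have ha : AntitoneOn NP (Icc (3/4:ℝ) y) := NP_antiOn (by norm_num) hy1'
                (fun w hw1 hw2 => hPneg w (by linarith) (by linarith))
              have hm : MonotoneOn Nf (Icc (3/4:ℝ) y) := Nf_monoOn (by norm_num) hy1'
                (fun z h1 h2 => by
                  have := ha ⟨h1.le, h2.le⟩ ⟨h.le, le_refl _⟩ h2.le
                  linarith)
              have := hm ⟨le_refl _, h.le⟩ ⟨h.le, le_refl _⟩ h.le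
              linarith
            · have hanp : AntitoneOn NP (Icc y s) := NP_antiOn (by linarith) hs1
                (fun w hw1 hw2 => hPneg w (by linarith) (by linarith))
              have hanf : AntitoneOn Nf (Icc y s) := Nf_antiOn (by linarith) hs1
                (fun z h1 h2 => by
                  have := hanp ⟨le_refl _, hy2⟩ ⟨h1.le, by linarith⟩ h1.le
                  linarith)
              have := hanf ⟨le_refl _, hy2⟩ ⟨hy2, le_refl _⟩ hy2
              linarith
        have hmono : MonotoneOn gf (Icc x0 s) := gf_monoOn (by linarith) hs1.le
          (fun y h1 h2 => hNfge y h1.le (by linarith))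
        have := hmono ⟨le_refl _, by linarith⟩ ⟨by linarith, le_refl _⟩ (by linarith)
        rw [gf_x0] at this
        linarith
      · have hNPs : NP s ≤ 0 := by
          by_contra hp
          push_neg at hp
          have ha : AntitoneOn NP (Icc (3/4:ℝ) s) := NP_antiOn (by norm_num) hs1
            (fun w hw1 hw2 => hPneg w (by linarith) (by linarith))
          have hm : MonotoneOn Nf (Icc (3/4:ℝ) s) := Nf_monoOn (by norm_num) hs1
            (fun z h1 h2 => by
              have := ha ⟨h1.le, h2.le⟩ ⟨hcase2.le, le_refl _⟩ h2.le
              linarith)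
          have := hm ⟨le_refl _, hcase2.le⟩ ⟨hcase2.le, le_refl _⟩ hcase2.le
          linarith
        have hNfy : ∀ y, s < y → y < 1 → Nf y ≤ 0 := by
          intro y h1 h2
          have hanp : AntitoneOn NP (Icc s y) := NP_antiOn (by linarith) h2
            (fun w hw1 hw2 => hPneg w (by linarith) (by linarith))
          have hanf : AntitoneOn Nf (Icc s y) := Nf_antiOn (by linarith) h2
            (fun z hz1 hz2 => by
              have := hanp ⟨le_refl _, by linarith⟩ ⟨hz1.le, by linarith⟩ hz1.le
              linarith)
          have := hanf ⟨le_refl _, h1.le⟩ ⟨h1.le, le_refl _⟩ h1.le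
          linarith
        have hganti : AntitoneOn gf (Icc s 1) := gf_antiOn hs0 (le_refl _) hNfy
        have := hganti ⟨le_refl _, hs1.le⟩ ⟨hs1.le, le_refl _⟩ hs1.le
        rw [gf_one] at this
        linarith

theorem stmt8 :
    (∀ s ∈ Set.Ioo (0:ℝ) 1,
      binEnt (((Real.sqrt 5 - 1) / 2) ^ 2) / (((Real.sqrt 5 - 1) / 2) * binEnt ((Real.sqrt 5 - 1) / 2))
        ≤ binEnt (s ^ 2) / (s * binEnt s)) ∧
    binEnt (((Real.sqrt 5 - 1) / 2) ^ 2) / (((Real.sqrt 5 - 1) / 2) * binEnt ((Real.sqrt 5 - 1) / 2))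
      = (Real.sqrt 5 + 1) / 2 := by
  have hx0pos : (0:ℝ) < x0 := by nlinarith [x0_lb]
  have hx0lt : x0 < 1 := by nlinarith [x0_ub]
  have hb : binEnt (x0^2) = binEnt x0 := by rw [x0_sq]; exact binEnt_symm x0
  have hBpos : 0 < binEnt x0 := binEnt_pos hx0pos hx0lt
  have hval : binEnt (x0^2) / (x0 * binEnt x0) = gr := by
    rw [hb, div_eq_iff (ne_of_gt (mul_pos hx0pos hBpos))]
    linear_combination (-(binEnt x0)) * grx0
  constructor
  · intro s hs
    obtain ⟨hs0, hs1⟩ := hs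
    have hBs : 0 < binEnt s := binEnt_pos hs0 hs1
    have hg := gf_nonneg s ⟨hs0, hs1⟩
    unfold gf at hg
    have goal2 : gr ≤ binEnt (s^2) / (s * binEnt s) := by
      rw [le_div_iff₀ (mul_pos hs0 hBs)]
      have hs2 : (0:ℝ) < s^2 := by positivity
      have h2 : gr * (binEnt s / s) * s^2 ≤ (binEnt (s^2) / s^2) * s^2 :=
        mul_le_mul_of_nonneg_right (by linarith) hs2.le
      have e1 : (binEnt (s^2) / s^2) * s^2 = binEnt (s^2) := by
        field_simp
      have e2 : gr * (binEnt s / s) * s^2 = gr * (s * binEnt s) := by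
        field_simp
      rw [e1, e2] at h2
      exact h2
    calc binEnt (x0 ^ 2) / (x0 * binEnt x0) = gr := hval
      _ ≤ binEnt (s^2) / (s * binEnt s) := goal2
  · exact hval
end
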